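/- (Theorem 1, equation (8)) Let Y^(0), Y^(1), ..., Y^(K) be i.i.d. random trajectories, each a random element of (ℝ^d)^{T+1}, writing Y^(i) = (Y^(i)_0,...,Y^(i)_T). For each τ ∈ {1,...,T} let h_τ : ℝ^d → ℝ^d be a measurable predictor and set ŷ^(i)_{τ|0} := h_τ(Y^(i)_0). Let δ ∈ (0,1), δ̄ := δ/T, p := ⌈(K+1)(1−δ̄)⌉, and for each τ define R^(i)_{τ|0} := ‖Y^(i)_τ − ŷ^(i)_{τ|0}‖ for i = 1,...,K and let C_{τ|0} be the p-th smallest element of the list (R^(1)_{τ|0},...,R^(K)_{τ|0},+∞). Then P(‖Y^(0)_τ − ŷ^(0)_{τ|0}‖ ≤ C_{τ|0} for all τ ∈ {1,...,T}) ≥ 1 − δ. -/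

import Mathlib

open MeasureTheory ProbabilityTheory
open scoped ENNReal

/-- The `p`-th smallest element (1-indexed) of the list consisting of the `K` extended-real
scores `R 1, ..., R K` together with `+∞`. -/
noncomputable def conformalBound (K : ℕ) (R : Fin K → EReal) (p : ℕ) : EReal :=
  (@List.insertionSort EReal (· ≤ ·) (Classical.decRel _)
    (((List.finRange K).map R) ++ [⊤])).getD (p - 1) ⊤

lemma countP_finRange (K : ℕ) (q : Fin K → Prop) [DecidablePred q] :
    (Finset.univ.filter q).card = (List.finRange K).countP (fun a => decide (q a)) := by
  simp [Fin.univ_def, Finset.filter, Finset.card, List.countP_eq_length_filter,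
    Multiset.filter_coe]

/-- If the conformal bound is exceeded by `x`, then at least `p` of the scores are `< x`. -/
lemma countA {K p : ℕ} {R : Fin K → EReal} {x : EReal}
    (hlt : conformalBound K R p < x) :
    p ≤ (Finset.univ.filter (fun i => R i < x)).card := by
  classical
  rcases Nat.eq_zero_or_pos p with rfl | hp1
  · exact Nat.zero_le _
  rw [conformalBound] at hlt
  set L : List EReal := ((List.finRange K).map R) ++ [⊤] with hL
  set S : List EReal := @List.insertionSort EReal (· ≤ ·) (Classical.decRel _) L with hS
  have hlen : S.length = K + 1 := by
    simp [hS, hL, List.length_insertionSort]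
  have hsorted : S.Pairwise (· ≤ ·) :=
    @List.pairwise_insertionSort EReal (·≤·) (Classical.decRel _) _ _ L
  have hidx : p - 1 < S.length := by
    by_contra hcon
    rw [List.getD_eq_default _ _ (by omega)] at hlt
    exact not_top_lt hlt
  have hgetlt : S.get ⟨p - 1, hidx⟩ < x := by
    rwa [List.getD_eq_getElem _ _ hidx] at hlt
  have hpK : p ≤ K + 1 := by omega
  have htake : ∀ a ∈ S.take p, a < x := by
    intro a ha
    rw [List.mem_iff_getElem] at ha
    obtain ⟨i, hi, rfl⟩ := ha
    have hi' : i < p := by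
      have := (List.length_take (i := p) (l := S)) ▸ hi
      simp at this; omega
    rw [List.getElem_take]
    have : S.get ⟨i, by omega⟩ ≤ S.get ⟨p - 1, hidx⟩ :=
      hsorted.rel_get_of_le (by simp [Fin.le_def]; omega)
    exact lt_of_le_of_lt this hgetlt
  have hcount : p ≤ S.countP (fun y => decide (y < x)) := by
    have h1 : (S.take p).countP (fun y => decide (y < x)) = p := by
      rw [List.countP_eq_length.mpr (fun a ha => by simpa using htake a ha)]
      rw [List.length_take]
      omega
    calc p = (S.take p).countP (fun y => decide (y < x)) := h1.symm
      _ ≤ (S.take p).countP _ + (S.drop p).countP (fun y => decide (y < x)) := Nat.le_add_right _ _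
      _ = S.countP (fun y => decide (y < x)) := by
          rw [← List.countP_append, List.take_append_drop]
  have hperm : S.countP (fun y => decide (y < x)) = L.countP (fun y => decide (y < x)) :=
    (@List.perm_insertionSort EReal (·≤·) (Classical.decRel _) L).countP_eq _
  rw [hperm, hL, List.countP_append, List.countP_map] at hcount
  have htop : ([⊤] : List EReal).countP (fun y => decide (y < x)) = 0 := by
    simp [List.countP, List.countP.go, not_top_lt]
  rw [htop, Nat.add_zero] at hcount
  rw [countP_finRange]
  exact hcount

/-- At most `n - p` indices can have at least `p` values strictly below them. -/
lemma rankBound (n p : ℕ) (g : Fin n → EReal) :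
    (Finset.univ.filter
      (fun i => p ≤ (Finset.univ.filter (fun j => g j < g i)).card)).card ≤ n - p := by
  classical
  set S := Finset.univ.filter
      (fun i => p ≤ (Finset.univ.filter (fun j => g j < g i)).card) with hSdef
  rcases S.eq_empty_or_nonempty with hS | hS
  · simp [hS]
  obtain ⟨i0, hi0, hmin⟩ := S.exists_min_image g hS
  set B := Finset.univ.filter (fun j => g j < g i0) with hBdef
  have hpB : p ≤ B.card := by
    rw [hSdef] at hi0; simpa using (Finset.mem_filter.mp hi0).2
  have hdisj : Disjoint S B := by
    rw [Finset.disjoint_left]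
    intro j hjS hjB
    have h1 := hmin j hjS
    have h2 : g j < g i0 := by rw [hBdef] at hjB; simpa using (Finset.mem_filter.mp hjB).2
    exact absurd h1 (not_le.mpr h2)
  have hcard : S.card + B.card ≤ n := by
    have := Finset.card_union_of_disjoint hdisj
    have hle : (S ∪ B).card ≤ (Finset.univ : Finset (Fin n)).card :=
      Finset.card_le_card (Finset.subset_univ _)
    rw [Finset.card_univ, Fintype.card_fin] at hle
    omega
  omega

lemma measS0 {E : Type*} [MeasurableSpace E] (n p : ℕ) (r : E → EReal) (hr : Measurable r)
    (i : Fin n) :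
    MeasurableSet {v : Fin n → E | p ≤ (Finset.univ.filter
      (fun j => r (v j) < r (v i))).card} := by
  classical
  have hNmeas : Measurable (fun v : Fin n → E =>
      (Finset.univ.filter (fun j => r (v j) < r (v i))).card) := by
    have heq : (fun v : Fin n → E =>
        (Finset.univ.filter (fun j => r (v j) < r (v i))).card)
        = fun v => ∑ j : Fin n, if r (v j) < r (v i) then 1 else 0 := by
      funext v; rw [Finset.card_filter]
    rw [heq]
    apply Finset.measurable_sum
    intro j _
    have hm : MeasurableSet {v : Fin n → E | r (v j) < r (v i)} :=
      measurableSet_lt (hr.comp (measurable_pi_apply j)) (hr.comp (measurable_pi_apply i))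
    exact Measurable.ite hm measurable_const measurable_const
  exact hNmeas measurableSet_Ici

/-- Key single-step bound: under the product (i.i.d.) law, the probability that at least `p`
of the `K + 1` scores are strictly below the score at index `0` is at most
`(K + 1 - p) / (K + 1)`. -/
lemma keyBound {E : Type*} [MeasurableSpace E] (ν : Measure E) [IsProbabilityMeasure ν]
    (K p : ℕ) (r : E → EReal) (hr : Measurable r) :
    Measure.pi (fun _ : Fin (K + 1) => ν)
      {v | p ≤ (Finset.univ.filter
          (fun j => r (v j) < r (v (0 : Fin (K + 1))))).card}
      ≤ ((K + 1 - p : ℕ) : ℝ≥0∞) / ((K : ℝ≥0∞) + 1) := by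
  classical
  set π := Measure.pi (fun _ : Fin (K + 1) => ν) with hπ
  set S : Fin (K + 1) → Set (Fin (K + 1) → E) :=
    fun i => {v | p ≤ (Finset.univ.filter (fun j => r (v j) < r (v i))).card} with hSdef
  have measS : ∀ i, MeasurableSet (S i) := fun i => measS0 (K + 1) p r hr i
  -- permutation invariance
  have hperm : ∀ i : Fin (K + 1), π (S i) = π (S 0) := by
    intro i
    set e : Fin (K + 1) ≃ Fin (K + 1) := Equiv.swap 0 i with he
    have hmp : MeasurePreserving (MeasurableEquiv.piCongrLeft (fun _ : Fin (K + 1) => E) e) π π :=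
      measurePreserving_piCongrLeft (fun _ : Fin (K + 1) => ν) e
    set φ := MeasurableEquiv.piCongrLeft (fun _ : Fin (K + 1) => E) e with hφdef
    have hφ : ∀ (v : Fin (K + 1) → E) (j : Fin (K + 1)), φ v j = v (e.symm j) := by
      intro v j
      have h1 : φ v (e (e.symm j)) = v (e.symm j) := by
        rw [hφdef, MeasurableEquiv.coe_piCongrLeft]
        exact Equiv.piCongrLeft_apply_apply (fun _ : Fin (K + 1) => E) e v (e.symm j)
      rwa [Equiv.apply_symm_apply] at h1
    have hpre : φ ⁻¹' (S i) = S 0 := by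
      ext v
      simp only [Set.mem_preimage, hSdef, Set.mem_setOf_eq, hφ]
      have h0 : e.symm i = 0 := by rw [he]; simp [Equiv.symm_swap, Equiv.swap_apply_right]
      rw [h0]
      constructor <;> intro hcard
      · refine le_trans hcard (le_of_eq ?_)
        apply Finset.card_bij (fun j _ => e.symm j)
        · intro a ha; simp only [Finset.mem_filter, Finset.mem_univ, true_and] at ha ⊢; exact ha
        · intro a _ b _ hab; exact e.symm.injective hab
        · intro b hb
          refine ⟨e b, ?_, by simp⟩
          simp only [Finset.mem_filter, Finset.mem_univ, true_and] at hb ⊢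
          simpa using hb
      · refine le_trans hcard (le_of_eq ?_)
        apply Finset.card_bij (fun j _ => e j)
        · intro a ha; simp only [Finset.mem_filter, Finset.mem_univ, true_and] at ha ⊢
          simpa using ha
        · intro a _ b _ hab; exact e.injective hab
        · intro b hb
          refine ⟨e.symm b, ?_, by simp⟩
          simp only [Finset.mem_filter, Finset.mem_univ, true_and] at hb ⊢; exact hb
    calc π (S i) = π (φ ⁻¹' (S i)) := (hmp.measure_preimage (measS i).nullMeasurableSet).symm
      _ = π (S 0) := by rw [hpre]
  -- sum bound
  have hprob : IsProbabilityMeasure π := by rw [hπ]; infer_instance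
  have hsum : ∑ i : Fin (K + 1), π (S i) ≤ ((K + 1 - p : ℕ) : ℝ≥0∞) := by
    have h1 : ∀ i, π (S i) = ∫⁻ v, (S i).indicator (fun _ => (1 : ℝ≥0∞)) v ∂π :=
      fun i => (lintegral_indicator_one (measS i)).symm
    calc ∑ i : Fin (K + 1), π (S i)
        = ∑ i : Fin (K + 1), ∫⁻ v, (S i).indicator (fun _ => (1 : ℝ≥0∞)) v ∂π :=
          Finset.sum_congr rfl fun i _ => h1 i
      _ = ∫⁻ v, ∑ i : Fin (K + 1), (S i).indicator (fun _ => (1 : ℝ≥0∞)) v ∂π :=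
          (lintegral_finset_sum _ (fun i _ => (measurable_const.indicator (measS i)))).symm
      _ ≤ ∫⁻ _, ((K + 1 - p : ℕ) : ℝ≥0∞) ∂π := by
          apply lintegral_mono
          intro v
          dsimp only
          have hpt : ∑ i : Fin (K + 1), (S i).indicator (fun _ => (1 : ℝ≥0∞)) v
              = ((Finset.univ.filter (fun i : Fin (K + 1) => v ∈ S i)).card : ℝ≥0∞) := by
            rw [Finset.card_filter, Nat.cast_sum]
            apply Finset.sum_congr rfl
            intro i _
            by_cases hv : v ∈ S i <;> simp [Set.indicator_apply, hv]
          rw [hpt]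
          have := rankBound (K + 1) p (fun i => r (v i))
          exact_mod_cast Nat.cast_le.mpr this
      _ = ((K + 1 - p : ℕ) : ℝ≥0∞) := by simp [measure_univ]
  have hsum2 : ∑ i : Fin (K + 1), π (S i) = ((K : ℝ≥0∞) + 1) * π (S 0) := by
    rw [Finset.sum_congr rfl fun i _ => hperm i, Finset.sum_const, Finset.card_univ,
      Fintype.card_fin, nsmul_eq_mul]
    norm_num
  have hfinal : π (S 0) * ((K : ℝ≥0∞) + 1) ≤ ((K + 1 - p : ℕ) : ℝ≥0∞) := by
    rw [mul_comm, ← hsum2]; exact hsum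
  exact (ENNReal.le_div_iff_mul_le (Or.inl (by simp)) (Or.inl (by simp))).mpr hfinal

/-- The joint law of finitely many independent random variables is the product of the laws. -/
lemma map_eq_pi {Ω E : Type*} [MeasurableSpace Ω] [MeasurableSpace E] {μ : Measure Ω}
    [IsProbabilityMeasure μ] {n : ℕ} (Y : Fin n → Ω → E) (hmeas : ∀ i, Measurable (Y i))
    (hindep : iIndepFun Y μ) :
    Measure.map (fun ω i => Y i ω) μ = Measure.pi (fun i => Measure.map (Y i) μ) := by
  haveI : ∀ i, IsProbabilityMeasure (Measure.map (Y i) μ) :=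
    fun i => Measure.isProbabilityMeasure_map (hmeas i).aemeasurable
  have hZ : Measurable (fun ω i => Y i ω) := measurable_pi_lambda _ hmeas
  refine (Measure.pi_eq fun s hs => ?_).symm
  rw [Measure.map_apply hZ (MeasurableSet.univ_pi hs)]
  have hpre : (fun ω i => Y i ω) ⁻¹' Set.pi Set.univ s = ⋂ i, Y i ⁻¹' s i := by
    ext ω; simp [Set.mem_pi]
  rw [hpre, hindep.meas_iInter (fun i => ⟨s i, hs i, rfl⟩)]
  exact Finset.prod_congr rfl fun i _ => (Measure.map_apply (hmeas i) (hs i)).symm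

lemma arithBound (K T p : ℕ) (δ : ℝ) (hδ0 : 0 < δ) (hδ1 : δ < 1) (hT : 1 ≤ T)
    (hp : p = ⌈((K : ℝ) + 1) * (1 - δ / T)⌉₊) :
    ((K + 1 - p : ℕ) : ℝ≥0∞) / ((K : ℝ≥0∞) + 1) ≤ ENNReal.ofReal (δ / T) := by
  have hT0 : (0 : ℝ) < T := by exact_mod_cast hT
  have hc0 : 0 < δ / T := div_pos hδ0 hT0
  have hple : ((K : ℝ) + 1) * (1 - δ / T) ≤ p := by rw [hp]; exact Nat.le_ceil _
  have hreal : ((K + 1 - p : ℕ) : ℝ) ≤ (δ / T) * ((K : ℝ) + 1) := by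
    rcases le_or_gt p (K + 1) with hcase | hcase
    · rw [Nat.cast_sub hcase]
      push_cast
      nlinarith
    · rw [Nat.sub_eq_zero_of_le (by omega)]
      have : (0:ℝ) ≤ δ / T * ((K:ℝ) + 1) := by positivity
      simpa using this
  rw [ENNReal.div_le_iff_le_mul (Or.inl (by simp)) (Or.inl (by simp))]
  have h1 : ((K : ℝ≥0∞) + 1) = ENNReal.ofReal ((K : ℝ) + 1) := by
    rw [ENNReal.ofReal_add (by positivity) zero_le_one]
    simp [ENNReal.ofReal_natCast]
  rw [h1, ← ENNReal.ofReal_mul hc0.le, ← ENNReal.ofReal_natCast]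
  exact ENNReal.ofReal_le_ofReal hreal

/-- **Theorem 1, equation (8): simultaneous validity of all `τ`-step-ahead prediction
regions computed at time `0`.** With `δ̄ := δ/T` and `p = ⌈(K+1)(1-δ̄)⌉`, the predictions
`ŷ_{τ|0} i = h τ (Y i 0)` and conformal bounds `C τ` (the `p`-th smallest element of the
nonconformity scores of the validation trajectories together with `+∞`) satisfy
`P(∀ τ ∈ {1,...,T}, ‖Y 0 τ - ŷ_{τ|0} 0‖ ≤ C τ) ≥ 1 - δ`. -/
theorem conformal_multistep_coverage
    {Ω : Type*} [MeasurableSpace Ω] (μ : Measure Ω) [IsProbabilityMeasure μ]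
    (d T K : ℕ) (hT : 1 ≤ T)
    (Y : Fin (K + 1) → Ω → (Fin (T + 1) → EuclideanSpace ℝ (Fin d)))
    (hmeas : ∀ i, Measurable (Y i))
    (hindep : iIndepFun Y μ)
    (hident : ∀ i, Measure.map (Y i) μ = Measure.map (Y 0) μ)
    (h : ℕ → EuclideanSpace ℝ (Fin d) → EuclideanSpace ℝ (Fin d))
    (hmeash : ∀ τ, Measurable (h τ))
    (δ : ℝ) (hδ : δ ∈ Set.Ioo (0 : ℝ) 1)
    (p : ℕ) (hp : p = ⌈((K : ℝ) + 1) * (1 - δ / T)⌉₊)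
    (C : ℕ → Ω → EReal)
    (hC : ∀ τ, 1 ≤ τ → ∀ (hτT : τ ≤ T) (ω : Ω), C τ ω =
      conformalBound K
        (fun i => ((‖Y i.succ ω ⟨τ, by omega⟩ - h τ (Y i.succ ω ⟨0, by omega⟩)‖ : ℝ) : EReal))
        p) :
    ENNReal.ofReal (1 - δ) ≤
      μ {ω | ∀ τ, 1 ≤ τ → ∀ hτT : τ ≤ T,
        ((‖Y 0 ω ⟨τ, by omega⟩ - h τ (Y 0 ω ⟨0, by omega⟩)‖ : ℝ) : EReal) ≤ C τ ω} := by
  classical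
  set ν := Measure.map (Y 0) μ with hν
  haveI : IsProbabilityMeasure ν := Measure.isProbabilityMeasure_map (hmeas 0).aemeasurable
  set Z : Ω → Fin (K + 1) → (Fin (T + 1) → EuclideanSpace ℝ (Fin d)) :=
    fun ω i => Y i ω with hZdef
  have hZmeas : Measurable Z := measurable_pi_lambda _ hmeas
  have hlaw : Measure.map Z μ = Measure.pi (fun _ : Fin (K + 1) => ν) := by
    rw [hZdef, map_eq_pi Y hmeas hindep]
    congr 1
    funext i
    rw [hident i]
  -- per-τ bad event bound
  have hbad : ∀ τ, 1 ≤ τ → ∀ hτT : τ ≤ T,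
      μ {ω | C τ ω <
        ((‖Y 0 ω ⟨τ, by omega⟩ - h τ (Y 0 ω ⟨0, by omega⟩)‖ : ℝ) : EReal)}
        ≤ ENNReal.ofReal (δ / T) := by
    intro τ h1 hτT
    set r : (Fin (T + 1) → EuclideanSpace ℝ (Fin d)) → EReal :=
      fun y => ((‖y ⟨τ, by omega⟩ - h τ (y ⟨0, by omega⟩)‖ : ℝ) : EReal) with hrdef
    have hrmeas : Measurable r := by
      apply measurable_coe_real_ereal.comp
      exact ((measurable_pi_apply (⟨τ, by omega⟩ : Fin (T + 1))).sub
        ((hmeash τ).comp (measurable_pi_apply (⟨0, by omega⟩ : Fin (T + 1))))).norm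
    set S0 : Set (Fin (K + 1) → (Fin (T + 1) → EuclideanSpace ℝ (Fin d))) :=
      {v | p ≤ (Finset.univ.filter (fun j => r (v j) < r (v (0 : Fin (K + 1))))).card} with hS0
    have hsub : {ω | C τ ω <
        ((‖Y 0 ω ⟨τ, by omega⟩ - h τ (Y 0 ω ⟨0, by omega⟩)‖ : ℝ) : EReal)} ⊆ Z ⁻¹' S0 := by
      intro ω hω
      simp only [Set.mem_setOf_eq] at hω
      rw [hC τ h1 hτT ω] at hω
      have hcnt := countA hω
      simp only [Set.mem_preimage, hS0, Set.mem_setOf_eq]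
      refine le_trans hcnt (Finset.card_le_card_of_injOn (fun i => Fin.succ i) ?_ ?_)
      · intro a ha
        simp only [Finset.mem_coe, Finset.mem_filter, Finset.mem_univ, true_and] at ha ⊢
        exact ha
      · intro a _ b _ hab
        exact Fin.succ_injective _ hab
    calc μ {ω | C τ ω <
          ((‖Y 0 ω ⟨τ, by omega⟩ - h τ (Y 0 ω ⟨0, by omega⟩)‖ : ℝ) : EReal)}
        ≤ μ (Z ⁻¹' S0) := measure_mono hsub
      _ = (Measure.map Z μ) S0 :=
          (Measure.map_apply hZmeas (measS0 (K + 1) p r hrmeas 0)).symm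
      _ = Measure.pi (fun _ : Fin (K + 1) => ν) S0 := by rw [hlaw]
      _ ≤ ((K + 1 - p : ℕ) : ℝ≥0∞) / ((K : ℝ≥0∞) + 1) := keyBound ν K p r hrmeas
      _ ≤ ENNReal.ofReal (δ / T) := arithBound K T p δ hδ.1 hδ.2 hT hp
  -- union bound
  set Bad : ℕ → Set Ω := fun τ => {ω | C τ ω <
    ((‖Y 0 ω (if hτ : τ ≤ T then (⟨τ, by omega⟩ : Fin (T + 1)) else 0)
        - h τ (Y 0 ω ⟨0, by omega⟩)‖ : ℝ) : EReal)} with hBad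
  have hbad' : ∀ τ ∈ Finset.Icc 1 T, μ (Bad τ) ≤ ENNReal.ofReal (δ / T) := by
    intro τ hτ
    obtain ⟨h1, hτT⟩ := Finset.mem_Icc.mp hτ
    have hEq : Bad τ = {ω | C τ ω <
        ((‖Y 0 ω ⟨τ, by omega⟩ - h τ (Y 0 ω ⟨0, by omega⟩)‖ : ℝ) : EReal)} := by
      rw [hBad]
      simp only [dif_pos hτT]
    rw [hEq]
    exact hbad τ h1 hτT
  set G : Set Ω := {ω | ∀ τ, 1 ≤ τ → ∀ hτT : τ ≤ T,
    ((‖Y 0 ω ⟨τ, by omega⟩ - h τ (Y 0 ω ⟨0, by omega⟩)‖ : ℝ) : EReal) ≤ C τ ω} with hG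
  have hGc : Gᶜ ⊆ ⋃ τ ∈ Finset.Icc 1 T, Bad τ := by
    intro ω hω
    simp only [hG, Set.mem_compl_iff, Set.mem_setOf_eq] at hω
    push_neg at hω
    obtain ⟨τ, h1, hτT, hlt⟩ := hω
    simp only [Set.mem_iUnion]
    refine ⟨τ, Finset.mem_Icc.mpr ⟨h1, hτT⟩, ?_⟩
    rw [hBad]
    simp only [Set.mem_setOf_eq, dif_pos hτT]
    exact hlt
  have hμGc : μ Gᶜ ≤ ENNReal.ofReal δ := by
    calc μ Gᶜ ≤ μ (⋃ τ ∈ Finset.Icc 1 T, Bad τ) := measure_mono hGc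
      _ ≤ ∑ τ ∈ Finset.Icc 1 T, μ (Bad τ) := measure_biUnion_finset_le _ _
      _ ≤ ∑ τ ∈ Finset.Icc 1 T, ENNReal.ofReal (δ / T) := Finset.sum_le_sum hbad'
      _ = (T : ℝ≥0∞) * ENNReal.ofReal (δ / T) := by
          rw [Finset.sum_const, Nat.card_Icc, nsmul_eq_mul]
          norm_num
      _ = ENNReal.ofReal δ := by
          rw [← ENNReal.ofReal_natCast, ← ENNReal.ofReal_mul (by positivity)]
          congr 1
          have hT0 : (T : ℝ) ≠ 0 := by positivity
          field_simp
  have h1le : (1 : ℝ≥0∞) ≤ μ G + ENNReal.ofReal δ := by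
    calc (1 : ℝ≥0∞) = μ (G ∪ Gᶜ) := by rw [Set.union_compl_self]; exact (measure_univ).symm
      _ ≤ μ G + μ Gᶜ := measure_union_le _ _
      _ ≤ μ G + ENNReal.ofReal δ := add_le_add_right hμGc _
  have hfin : ENNReal.ofReal (1 - δ) ≤ μ G := by
    rw [ENNReal.ofReal_sub 1 hδ.1.le, ENNReal.ofReal_one]
    exact tsub_le_iff_right.mpr h1le
  exact hfin
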